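/- arXiv:1708.06573 — 2 statements merged into one kernel-verified Lean document; each statement's English description precedes it below -/
import Mathlib

section
/- For every m₁ with |m₁| ≤ 1 and every v ∈ ℝ³ with v ≠ 0, one has ∫_{ℝ³} (v · v_*) Ψ_{0,1,m₁}(v_*) dv_* = √(4π/3) · |v| · Y_1^{m₁}(v/|v|) (for v = 0 both sides vanish). -/
open MeasureTheory Real
open scoped RealInnerProductSpace BigOperators

noncomputable section

/-- The velocity space `ℝ³`. -/
abbrev V3 : Type := EuclideanSpace ℝ (Fin 3)

/-- The absolute Maxwellian `μ(v) = (2π)^{-3/2} e^{-|v|²/2}`. -/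
def gaussM (v : V3) : ℝ := (2 * π) ^ (-(3:ℝ)/2) * Real.exp (-‖v‖^2 / 2)

/-- Legendre polynomial via Rodrigues' formula. -/
def legendreP (l : ℕ) (x : ℝ) : ℝ :=
  (1 / (2^l * (Nat.factorial l : ℝ))) * iteratedDeriv l (fun y : ℝ => (y^2 - 1)^l) x

/-- Associated Legendre function `P_l^k` for `k ≥ 0`. -/
def assocLegendreP (l k : ℕ) (x : ℝ) : ℝ :=
  (Real.sqrt (1 - x^2))^k * iteratedDeriv k (legendreP l) x

/-- Normalisation factor `N_{l,m}`. -/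
def sphNormC (l : ℕ) (m : ℤ) : ℝ :=
  Real.sqrt (((2*(l:ℝ)+1) * (Nat.factorial (l - m.natAbs) : ℝ)) /
    (4 * π * (Nat.factorial (l + m.natAbs) : ℝ)))

/-- Spherical harmonic `Y_l^m` evaluated at a (unit) vector `ω`, with the convention
that it vanishes when `l < 0` or `|m| > l`.  For `ω = (cos θ, sin θ cos φ, sin θ sin φ)`
one has `ω 0 = cos θ` and `arg (ω 1 + i ω 2) = φ (mod 2π)`. -/
def sphY (l m : ℤ) (ω : V3) : ℂ :=
  if 0 ≤ l ∧ (m.natAbs : ℤ) ≤ l then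
    ((sphNormC l.toNat m * assocLegendreP l.toNat m.natAbs (ω 0) : ℝ) : ℂ) *
      Complex.exp (Complex.I * (m : ℂ) *
        ((Complex.arg ((ω 1 : ℂ) + Complex.I * (ω 2 : ℂ)) : ℝ) : ℂ))
  else 0

/-- The point `(cos θ, sin θ cos φ, sin θ sin φ)` of the unit sphere `S² ⊂ ℝ³`. -/
def sphPt (θ φ : ℝ) : V3 :=
  (WithLp.equiv 2 (Fin 3 → ℝ)).symm ![Real.cos θ, Real.sin θ * Real.cos φ, Real.sin θ * Real.sin φ]

/-- Integral over the unit sphere `S²`, in spherical coordinates. -/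
def sphereIntegral (F : V3 → ℂ) : ℂ :=
  ∫ θ in (0:ℝ)..π, ∫ φ in (0:ℝ)..(2*π), F (sphPt θ φ) * ((Real.sin θ : ℝ) : ℂ)

/-- Gaunt-type coefficient `C^{m₂,m}_{l,l'} = ∫_{S²} Y_2^{m₂} Y_l^m Y_{l'}^{-m₂-m} dω`. -/
def gauntC (m2 m l l' : ℤ) : ℂ :=
  sphereIntegral (fun ω => sphY 2 m2 ω * sphY l m ω * sphY l' (-(m2+m)) ω)

/-- Gaunt-type coefficient `C̃^{m₁,m}_{l,l'} = ∫_{S²} Y_1^{m₁} Y_l^m Y_{l'}^{-m₁-m} dω`. -/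
def gauntCt (m1 m l l' : ℤ) : ℂ :=
  sphereIntegral (fun ω => sphY 1 m1 ω * sphY l m ω * sphY l' (-(m1+m)) ω)

/-- Coefficient `A^-_{n,l,m,m₁}`. -/
def coefAm (n l m m1 : ℤ) : ℂ :=
  ((4 * Real.sqrt (π/3) * ((l:ℝ) - 1) * Real.sqrt (2*((n:ℝ)+1)) : ℝ) : ℂ) *
    gauntCt m1 m l (l-1)

/-- Coefficient `A^+_{n,l,m,m₁}`. -/
def coefAp (n l m m1 : ℤ) : ℂ :=
  ((4 * Real.sqrt (π/3) * ((l:ℝ) + 2) * Real.sqrt (2*(n:ℝ)+2*(l:ℝ)+3) : ℝ) : ℂ) *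
    gauntCt m1 m l (l+1)

/-- Coefficient `A^1_{n,l,m,m₂}`. -/
def coefA1 (n l m m2 : ℤ) : ℂ :=
  (((-(4 * Real.sqrt (π/15))) * Real.sqrt (4*((n:ℝ)+2)*((n:ℝ)+1)) : ℝ) : ℂ) *
    gauntC m2 m l (l-2)

/-- Coefficient `A^2_{n,l,m,m₂}`. -/
def coefA2 (n l m m2 : ℤ) : ℂ :=
  ((4 * Real.sqrt (π/15) * Real.sqrt (2*((n:ℝ)+1)*(2*(n:ℝ)+2*(l:ℝ)+3)) : ℝ) : ℂ) *
    gauntC m2 m l l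

/-- Coefficient `A^3_{n,l,m,m₂}`. -/
def coefA3 (n l m m2 : ℤ) : ℂ :=
  (((-(4 * Real.sqrt (π/15))) * Real.sqrt ((2*(n:ℝ)+2*(l:ℝ)+5)*(2*(n:ℝ)+2*(l:ℝ)+3)) : ℝ) : ℂ) *
    gauntC m2 m l (l+2)

/-- Laguerre polynomial `L_n^{(β)}`. -/
def laguerreL (n : ℕ) (β : ℝ) (x : ℝ) : ℝ :=
  ∑ r ∈ Finset.range (n+1),
    (-1)^(n-r) * Real.Gamma (β + n + 1) /
      ((Nat.factorial r : ℝ) * (Nat.factorial (n-r) : ℝ) * Real.Gamma (β + (n-r : ℕ) + 1)) *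
      x^(n-r)

/-- Eigenfunction `φ_{n,l,m}` of the harmonic oscillator / Laplace–Beltrami operator,
with the convention that it vanishes if `n < 0`, `l < 0` or `|m| > l`. -/
def phiE (n l m : ℤ) (v : V3) : ℂ :=
  if 0 ≤ n ∧ 0 ≤ l ∧ (m.natAbs : ℤ) ≤ l then
    ((Real.sqrt ((Nat.factorial n.toNat : ℝ) /
        (Real.sqrt 2 * Real.Gamma ((n.toNat : ℝ) + (l.toNat : ℝ) + 3/2))) *
       (‖v‖ / Real.sqrt 2) ^ l.toNat * Real.exp (-‖v‖^2/4) *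
       laguerreL n.toNat ((l.toNat : ℝ) + 1/2) (‖v‖^2/2) : ℝ) : ℂ) *
      sphY l m (‖v‖⁻¹ • v)
  else 0

/-- Partial derivative `∂_j` of a complex valued function on `ℝ³`. -/
def pd (j : Fin 3) (f : V3 → ℂ) (v : V3) : ℂ :=
  fderiv ℝ f v (EuclideanSpace.single j 1)

/-- The matrix `a(u) = |u|² I − u ⊗ u`. -/
def aMat (u : V3) (k j : Fin 3) : ℝ :=
  (if k = j then ‖u‖^2 else 0) - u k * u j

/-- Landau collision operator with Maxwellian molecules. -/
def QL (g f : V3 → ℂ) (v : V3) : ℂ :=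
  ∑ k : Fin 3, pd k (fun w => ∑ j : Fin 3,
      ∫ vs : V3, ((aMat (w - vs) k j : ℝ) : ℂ) * (g vs * pd j f w - pd j g vs * f w)) v

/-- The nonlinear operator `𝐋(f,g) = μ^{-1/2} Q_L(√μ f, √μ g)`. -/
def LandauL (f g : V3 → ℂ) (v : V3) : ℂ :=
  ((Real.sqrt (gaussM v) : ℝ) : ℂ)⁻¹ *
    QL (fun w => ((Real.sqrt (gaussM w) : ℝ) : ℂ) * f w)
       (fun w => ((Real.sqrt (gaussM w) : ℝ) : ℂ) * g w) v

/-- The linearized Landau operator `𝓛(g) = −μ^{-1/2}(Q_L(√μ g, μ) + Q_L(μ, √μ g))`. -/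
def calL (g : V3 → ℂ) (v : V3) : ℂ :=
  -(((Real.sqrt (gaussM v) : ℝ) : ℂ)⁻¹ *
    (QL (fun w => ((Real.sqrt (gaussM w) : ℝ) : ℂ) * g w) (fun w => ((gaussM w : ℝ) : ℂ)) v
     + QL (fun w => ((gaussM w : ℝ) : ℂ)) (fun w => ((Real.sqrt (gaussM w) : ℝ) : ℂ) * g w) v))

/-- `L²(ℝ³)` hermitian pairing `⟨u,w⟩ = ∫ u conj(w)`. -/
def pairL2 (u w : V3 → ℂ) : ℂ := ∫ v : V3, u v * (starRingEnd ℂ) (w v)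



/-! ### Auxiliary lemmas -/

lemma gm0' : ∫ x : ℝ, Real.exp (-x^2/2) = Real.sqrt (2*π) := by
  have h := integral_gaussian (1/2 : ℝ)
  simp_rw [show ∀ x : ℝ, -(1/2 : ℝ) * x ^ 2 = -x^2/2 from fun x => by ring] at h
  rw [h]
  rw [show π / (1/2) = 2 * π by ring]

lemma gm1' : ∫ x : ℝ, x * Real.exp (-x^2/2) = 0 := by
  have h := MeasureTheory.integral_neg_eq_self (fun x : ℝ => x * Real.exp (-x^2/2)) volume
  simp only [neg_sq, neg_mul] at h
  rw [MeasureTheory.integral_neg] at h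
  linarith

lemma gm2' : ∫ x : ℝ, x^2 * Real.exp (-x^2/2) = Real.sqrt (2*π) := by
  have h0 : ∀ x : ℝ, (fun y : ℝ => y^2 * Real.exp (-y^2/2)) |x|
      = x^2 * Real.exp (-x^2/2) := by
    intro x; simp [sq_abs]
  calc ∫ x : ℝ, x^2 * Real.exp (-x^2/2)
      = ∫ x : ℝ, (fun y : ℝ => y^2 * Real.exp (-y^2/2)) |x| := by
        simp_rw [h0]
    _ = 2 * ∫ x in Set.Ioi (0:ℝ), x^2 * Real.exp (-x^2/2) :=
        integral_comp_abs (f := fun y : ℝ => y^2 * Real.exp (-y^2/2))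
    _ = Real.sqrt (2*π) := by
        have h : ∫ x in Set.Ioi (0:ℝ), x ^ (2:ℝ) * Real.exp (-(1/2) * x ^ (2:ℝ))
            = (1/2 : ℝ) ^ (-((2:ℝ) + 1) / 2) * (1 / 2) * Real.Gamma (((2:ℝ) + 1) / 2) :=
          integral_rpow_mul_exp_neg_mul_rpow (by norm_num) (by norm_num) (by norm_num)
        simp_rw [show ∀ x : ℝ, x ^ (2:ℝ) = x ^ (2:ℕ) from fun x => by
          rw [← Real.rpow_natCast x 2]; norm_num] at h
        simp_rw [show ∀ x : ℝ, -(1/2 : ℝ) * x ^ 2 = -x^2/2 from fun x => by ring] at h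
        rw [h]
        have hG : Real.Gamma (((2:ℝ)+1)/2) = Real.sqrt π / 2 := by
          rw [show ((2:ℝ)+1)/2 = 1/2 + 1 by norm_num, Real.Gamma_add_one (by norm_num),
            Real.Gamma_one_half_eq]; ring
        have hp : (1/2 : ℝ) ^ (-((2:ℝ)+1)/2) = 2 * Real.sqrt 2 := by
          rw [show (-((2:ℝ)+1)/2) = -(3/2 : ℝ) by norm_num, show (1/2 : ℝ) = 2⁻¹ by norm_num,
            Real.inv_rpow (by norm_num), ← Real.rpow_neg (by norm_num), neg_neg,
            show (3/2 : ℝ) = 1 + 1/2 by norm_num, Real.rpow_add (by norm_num), Real.rpow_one,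
            ← Real.sqrt_eq_rpow]
        rw [hG, hp, Real.sqrt_mul (by norm_num)]
        ring

lemma int1d (n : ℕ) : Integrable (fun t : ℝ => t ^ n * Real.exp (-t^2/2)) := by
  have h := integrable_rpow_mul_exp_neg_mul_sq (b := 1/2) (by norm_num)
    (s := (n:ℝ)) (by exact_mod_cast neg_one_lt_zero.trans_le (Nat.cast_nonneg n))
  simp_rw [Real.rpow_natCast] at h
  simp_rw [show ∀ x : ℝ, -(1/2:ℝ)*x^2 = -x^2/2 from fun x => by ring] at h
  exact h

lemma comp_eq (i j : Fin 3) (x : Fin 3 → ℝ) :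
    (((MeasurableEquiv.toLp 2 (Fin 3 → ℝ)).symm).symm x) i
        * (((MeasurableEquiv.toLp 2 (Fin 3 → ℝ)).symm).symm x) j
        * Real.exp (-‖((MeasurableEquiv.toLp 2 (Fin 3 → ℝ)).symm).symm x‖^2/2)
      = ∏ k, (x k) ^ ((if i = k then 1 else 0) + (if j = k then 1 else 0))
            * Real.exp (-(x k)^2/2) := by
  have happ : ∀ k : Fin 3, (((MeasurableEquiv.toLp 2 (Fin 3 → ℝ)).symm).symm x) k = x k := by
    intro k
    rfl
  have hnorm : ‖((MeasurableEquiv.toLp 2 (Fin 3 → ℝ)).symm).symm x‖^2 = ∑ k, (x k)^2 := by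
    rw [EuclideanSpace.norm_eq]
    rw [Real.sq_sqrt (by positivity)]
    simp_rw [happ, Real.norm_eq_abs, sq_abs]
  have hprod : ∏ k, (x k) ^ ((if i = k then 1 else 0) + (if j = k then 1 else 0))
      = x i * x j := by
    fin_cases i <;> fin_cases j <;> simp [Fin.prod_univ_three] <;> ring
  simp only [happ, hnorm]
  rw [Finset.prod_mul_distrib, hprod, ← Real.exp_sum]
  congr 1
  rw [← Finset.sum_div, ← Finset.sum_neg_distrib]

lemma integrable_mom (i j : Fin 3) :
    Integrable (fun vs : V3 => vs i * vs j * Real.exp (-‖vs‖^2/2)) := by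
  have hmp := EuclideanSpace.volume_preserving_symm_measurableEquiv_toLp (Fin 3)
  rw [← MeasurePreserving.integrable_comp_emb hmp.symm
    (MeasurableEquiv.measurableEmbedding _)]
  simp only [Function.comp_def, comp_eq i j]
  exact Integrable.fintype_prod (f := fun k (t : ℝ) =>
    t ^ ((if i = k then 1 else 0) + (if j = k then 1 else 0)) * Real.exp (-t^2/2))
    (fun k => int1d _)

lemma mom (i j : Fin 3) :
    ∫ vs : V3, vs i * vs j * Real.exp (-‖vs‖^2/2)
      = if i = j then Real.sqrt (2*π)^3 else 0 := by
  have hmp := (EuclideanSpace.volume_preserving_symm_measurableEquiv_toLp (Fin 3)).symm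
  rw [← hmp.integral_comp (MeasurableEquiv.measurableEmbedding _)]
  simp only [comp_eq i j]
  rw [integral_fintype_prod_volume_eq_prod (ι := Fin 3) (f := fun k (t : ℝ) =>
    t ^ ((if i = k then 1 else 0) + (if j = k then 1 else 0)) * Real.exp (-t^2/2))]
  fin_cases i <;> fin_cases j <;>
    simp [Fin.prod_univ_three, gm0', gm1', gm2'] <;> ring

lemma legendreP_one : legendreP 1 = fun x => x := by
  funext x
  unfold legendreP
  rw [iteratedDeriv_one]
  have h : (deriv fun y : ℝ => (y ^ 2 - 1) ^ 1) x = 2 * x := by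
    simp only [pow_one]
    rw [deriv_sub_const]
    simp
  rw [h]
  simp [Nat.factorial]

lemma assoc10 (x : ℝ) : assocLegendreP 1 0 x = x := by
  unfold assocLegendreP
  rw [legendreP_one]
  simp

lemma assoc11 (x : ℝ) : assocLegendreP 1 1 x = Real.sqrt (1 - x^2) := by
  unfold assocLegendreP
  rw [legendreP_one, iteratedDeriv_one]
  simp

lemma normC10 : sphNormC 1 0 = Real.sqrt (3/(4*π)) := by
  unfold sphNormC
  congr 1
  norm_num [Nat.factorial]

lemma normC11 (m : ℤ) (hm : m.natAbs = 1) : sphNormC 1 m = Real.sqrt (3/(8*π)) := by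
  unfold sphNormC
  rw [hm]
  congr 1
  norm_num [Nat.factorial]
  ring

lemma unit_sum (w : V3) (hw : ‖w‖ = 1) : (w 0)^2 + (w 1)^2 + (w 2)^2 = 1 := by
  have h := EuclideanSpace.norm_eq w
  rw [hw] at h
  have h2 : (∑ i, ‖w i‖^2) = 1 := by
    rw [← Real.sqrt_eq_one.mp h.symm]
  simpa [Fin.sum_univ_three, Real.norm_eq_abs, sq_abs] using h2

lemma abs_z (w : V3) (hw : ‖w‖ = 1) :
    ‖(w 1 : ℂ) + Complex.I * (w 2 : ℂ)‖
      = Real.sqrt (1 - (w 0)^2) := by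
  rw [Complex.norm_def, Complex.normSq_apply]
  have hre : ((w 1 : ℂ) + Complex.I * (w 2 : ℂ)).re = w 1 := by simp
  have him : ((w 1 : ℂ) + Complex.I * (w 2 : ℂ)).im = w 2 := by simp
  rw [hre, him]
  have := unit_sum w hw
  congr 1
  nlinarith [this]

lemma sphY10 (w : V3) : sphY 1 0 w = ((Real.sqrt (3/(4*π)) * w 0 : ℝ) : ℂ) := by
  unfold sphY
  rw [if_pos (by decide)]
  simp [normC10, assoc10]

lemma sphY11 (w : V3) (hw : ‖w‖ = 1) :
    sphY 1 1 w = (Real.sqrt (3/(8*π)) : ℂ) * ((w 1 : ℂ) + Complex.I * (w 2 : ℂ)) := by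
  unfold sphY
  rw [if_pos (by decide)]
  set z : ℂ := (w 1 : ℂ) + Complex.I * (w 2 : ℂ) with hz
  have h1 : ((1:ℤ).toNat) = 1 := rfl
  have h2 : ((1:ℤ).natAbs) = 1 := rfl
  rw [h1, h2, normC11 1 rfl, assoc11]
  rw [← abs_z w hw]
  push_cast
  rw [show Complex.I * (1:ℂ) * (Complex.arg z : ℂ) = (Complex.arg z : ℂ) * Complex.I by ring]
  rw [mul_assoc, Complex.norm_mul_exp_arg_mul_I]

lemma sphY1m1 (w : V3) (hw : ‖w‖ = 1) :
    sphY 1 (-1) w = (Real.sqrt (3/(8*π)) : ℂ) * ((w 1 : ℂ) - Complex.I * (w 2 : ℂ)) := by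
  unfold sphY
  rw [if_pos (by decide)]
  set z : ℂ := (w 1 : ℂ) + Complex.I * (w 2 : ℂ) with hz
  have h1 : ((1:ℤ).toNat) = 1 := rfl
  have h2 : ((-1:ℤ).natAbs) = 1 := rfl
  rw [h1, h2, normC11 (-1) (by decide), assoc11]
  rw [← abs_z w hw]
  have hconj : (‖z‖ : ℂ) * Complex.exp (Complex.I * ((-1:ℤ) : ℂ) * (Complex.arg z : ℂ))
      = (starRingEnd ℂ) z := by
    have h := congrArg (starRingEnd ℂ) (Complex.norm_mul_exp_arg_mul_I z)
    rw [map_mul, Complex.conj_ofReal, ← Complex.exp_conj] at h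
    rw [show (starRingEnd ℂ) ((Complex.arg z : ℂ) * Complex.I)
      = -((Complex.arg z : ℂ) * Complex.I) by
        rw [map_mul, Complex.conj_ofReal, Complex.conj_I]; ring] at h
    rw [← h]
    ring_nf
  push_cast
  push_cast at hconj
  rw [mul_assoc, hconj]
  congr 1
  rw [hz]
  rw [map_add, map_mul, Complex.conj_ofReal, Complex.conj_ofReal, Complex.conj_I]
  ring

lemma Gamma_five_half : Real.Gamma (5/2) = 3/4 * Real.sqrt π := by
  rw [show (5/2:ℝ) = 3/2 + 1 by norm_num, Real.Gamma_add_one (by norm_num),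
    show (3/2:ℝ) = 1/2 + 1 by norm_num, Real.Gamma_add_one (by norm_num),
    Real.Gamma_one_half_eq]
  ring

lemma laguerre_zero (b x : ℝ) (hb : Real.Gamma (b+1) ≠ 0) : laguerreL 0 b x = 1 := by
  unfold laguerreL
  rw [Finset.sum_range_one]
  simp only [Nat.sub_self, pow_zero, Nat.factorial_zero, Nat.cast_one, Nat.cast_zero]
  rw [show b + (0:ℝ) + 1 = b + 1 by ring]
  field_simp

lemma sqrt_gaussM (vs : V3) :
    Real.sqrt (gaussM vs) = (2*π)^(-(3:ℝ)/4) * Real.exp (-‖vs‖^2/4) := by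
  unfold gaussM
  rw [Real.sqrt_mul (by positivity)]
  congr 1
  · rw [Real.sqrt_eq_rpow, ← Real.rpow_mul (by positivity)]
    norm_num
  · rw [← Real.exp_half]
    congr 1
    ring

def DC : ℝ := Real.sqrt (1 / (Real.sqrt 2 * Real.Gamma (5/2))) * (2*π)^(-(3:ℝ)/4) / Real.sqrt 2

lemma key_const : DC * Real.sqrt (2*π)^3 = Real.sqrt (4*π/3) := by
  have hDC : 0 ≤ DC * Real.sqrt (2*π)^3 := by
    unfold DC
    positivity
  have hsq : (DC * Real.sqrt (2*π)^3)^2 = 4*π/3 := by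
    unfold DC
    rw [mul_pow, div_pow, mul_pow, Real.sq_sqrt (by positivity), Real.sq_sqrt (by norm_num)]
    have h1 : ((2*π) ^ (-(3:ℝ)/4))^2 = (2*π) ^ (-(3:ℝ)/2) := by
      rw [← Real.rpow_natCast ((2*π) ^ (-(3:ℝ)/4)) 2, ← Real.rpow_mul (by positivity)]
      norm_num
    have h2 : (Real.sqrt (2*π)^3)^2 = (2*π)^3 := by
      rw [show (Real.sqrt (2*π)^3)^2 = (Real.sqrt (2*π)^2)^3 by ring,
        Real.sq_sqrt (by positivity)]
    rw [h1, h2, Gamma_five_half]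
    have h3 : (2*π) ^ (-(3:ℝ)/2) * (2*π)^(3:ℕ) = 2*π*Real.sqrt (2*π) := by
      rw [← Real.rpow_natCast (2*π) 3, ← Real.rpow_add (by positivity)]
      rw [show (-(3:ℝ)/2 + (3:ℕ)) = 1 + 1/2 by norm_num, Real.rpow_add (by positivity),
        Real.rpow_one, ← Real.sqrt_eq_rpow]
    have hsπ : Real.sqrt π ^ 2 = π := Real.sq_sqrt (le_of_lt pi_pos)
    have hs2 : Real.sqrt 2 ^ 2 = 2 := Real.sq_sqrt (by norm_num)
    have h4 : Real.sqrt (2*π) = Real.sqrt 2 * Real.sqrt π := Real.sqrt_mul (by norm_num) π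
    have h2pos : (0:ℝ) < Real.sqrt 2 := by positivity
    have hπpos : (0:ℝ) < Real.sqrt π := Real.sqrt_pos.mpr pi_pos
    have key : (1 / (Real.sqrt 2 * (3/4 * Real.sqrt π)))
        * ((2*π) ^ (-(3:ℝ)/2) * (2*π)^(3:ℕ)) / 2 = 4*π/3 := by
      rw [h3, h4]
      field_simp
    linear_combination key
  calc DC * Real.sqrt (2*π)^3 = Real.sqrt ((DC * Real.sqrt (2*π)^3)^2) :=
        (Real.sqrt_sq hDC).symm
    _ = Real.sqrt (4*π/3) := by rw [hsq]

lemma rcast (x : ℝ) : ((x : ℝ) : ℂ) = (RCLike.ofReal x : ℂ) := rfl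

lemma innerSum3 (v vs : V3) : (⟪v, vs⟫ : ℝ) = ∑ i, v i * vs i := by
  simp [PiLp.inner_apply, RCLike.inner_apply, conj_trivial, mul_comm]

lemma intg_rw (v : V3) (j : Fin 3) (vs : V3) :
    (⟪v, vs⟫ : ℝ) * Real.exp (-‖vs‖^2/2) * vs j
      = ∑ i, v i * (vs i * vs j * Real.exp (-‖vs‖^2/2)) := by
  rw [innerSum3, Finset.sum_mul, Finset.sum_mul]
  congr 1
  funext i
  ring

lemma intg_integrable (v : V3) (j : Fin 3) :
    Integrable (fun vs : V3 => (⟪v, vs⟫ : ℝ) * Real.exp (-‖vs‖^2/2) * vs j) := by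
  simp_rw [intg_rw v j]
  exact integrable_finset_sum _ (fun i _ => (integrable_mom i j).const_mul (v i))

lemma intg (v : V3) (j : Fin 3) :
    ∫ vs : V3, (⟪v, vs⟫ : ℝ) * Real.exp (-‖vs‖^2/2) * vs j
      = v j * Real.sqrt (2*π)^3 := by
  simp_rw [intg_rw v j]
  rw [MeasureTheory.integral_finset_sum _
    (fun i _ => (integrable_mom i j).const_mul (v i))]
  simp_rw [MeasureTheory.integral_const_mul, mom]
  simp [Finset.sum_ite_eq', mul_ite]

lemma phiE_eq (m : ℤ) (hm : m.natAbs ≤ 1) (vs : V3) :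
    phiE 0 1 m vs
      = ((Real.sqrt (1 / (Real.sqrt 2 * Real.Gamma (5/2))) * (‖vs‖ / Real.sqrt 2)
          * Real.exp (-‖vs‖^2/4) : ℝ) : ℂ) * sphY 1 m (‖vs‖⁻¹ • vs) := by
  unfold phiE
  rw [if_pos ⟨le_refl 0, by norm_num, by exact_mod_cast hm⟩]
  congr 2
  have hl : ((1:ℤ).toNat) = 1 := rfl
  have hn : ((0:ℤ).toNat) = 0 := rfl
  rw [hl, hn]
  rw [laguerre_zero _ _ (by
    rw [show ((1:ℕ):ℝ) + 1/2 + 1 = 5/2 by push_cast; norm_num, Gamma_five_half]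
    positivity)]
  rw [show ((Nat.factorial 0 : ℝ)) = 1 by norm_num [Nat.factorial]]
  rw [show ((0:ℕ):ℝ) + ((1:ℕ):ℝ) + 3/2 = 5/2 by push_cast; norm_num]
  ring

/-- `∫ (v·v_*) Ψ_{0,1,m₁}(v_*) dv_* = √(4π/3) |v| Y_1^{m₁}(v/|v|)` for `v ≠ 0`,
where `Ψ_{n,l,m} = √μ φ_{n,l,m}`. -/
theorem integral_inner_Psi01 (m1 : ℤ) (hm1 : m1.natAbs ≤ 1) (v : V3) (hv : v ≠ 0) :
    (∫ vs : V3, ((⟪v, vs⟫ : ℝ) : ℂ) * (((Real.sqrt (gaussM vs) : ℝ) : ℂ) * phiE 0 1 m1 vs))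
      = ((Real.sqrt (4*π/3) * ‖v‖ : ℝ) : ℂ) * sphY 1 m1 (‖v‖⁻¹ • v) := by
  have hv0 : ‖v‖ ≠ 0 := by simpa using hv
  have hwv : ‖(‖v‖⁻¹ • v : V3)‖ = 1 := norm_smul_inv_norm hv
  have hee : Real.exp (-‖v‖^2/2) = Real.exp (-‖v‖^2/2) := rfl
  have hexp : ∀ r : ℝ, Real.exp (-r^2/2) = Real.exp (-r^2/4) * Real.exp (-r^2/4) := by
    intro r
    rw [← Real.exp_add]
    congr 1
    ring
  have hsm : ∀ (vs : V3) (j : Fin 3), ((‖vs‖⁻¹ • vs : V3)) j = ‖vs‖⁻¹ * vs j := by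
    intro vs j
    rfl
  have key0 : DC * Real.sqrt (3/(4*π)) * Real.sqrt (2*π)^3
      = Real.sqrt (4*π/3) * Real.sqrt (3/(4*π)) := by
    linear_combination Real.sqrt (3/(4*π)) * key_const
  have key1 : DC * Real.sqrt (3/(8*π)) * Real.sqrt (2*π)^3
      = Real.sqrt (4*π/3) * Real.sqrt (3/(8*π)) := by
    linear_combination Real.sqrt (3/(8*π)) * key_const
  have hDCdef : Real.sqrt (1 / (Real.sqrt 2 * Real.Gamma (5/2))) * (2*π)^(-(3:ℝ)/4)
      / Real.sqrt 2 = DC := rfl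
  have hpre : ∀ (vs : V3), vs ≠ 0 → ∀ j : Fin 3,
      (⟪v, vs⟫ : ℝ) * ((2*π)^(-(3:ℝ)/4) * Real.exp (-‖vs‖^2/4)
        * (Real.sqrt (1 / (Real.sqrt 2 * Real.Gamma (5/2))) * (‖vs‖ / Real.sqrt 2)
          * Real.exp (-‖vs‖^2/4))) * (‖vs‖⁻¹ * vs j)
      = DC * ((⟪v, vs⟫ : ℝ) * Real.exp (-‖vs‖^2/2) * vs j) := by
    intro vs hvs j
    have hns : ‖vs‖ ≠ 0 := by simpa using hvs
    rw [hexp ‖vs‖, ← hDCdef]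
    have h2 : Real.sqrt 2 ≠ 0 := by positivity
    field_simp
  rcases show m1 = -1 ∨ m1 = 0 ∨ m1 = 1 by omega with hm | hm | hm
  · -- m1 = -1
    subst hm
    have hfun : ∀ vs : V3,
        ((⟪v, vs⟫ : ℝ) : ℂ) * (((Real.sqrt (gaussM vs) : ℝ) : ℂ) * phiE 0 1 (-1) vs)
          = ((DC * Real.sqrt (3/(8*π)) : ℝ) : ℂ) *
            (((⟪v, vs⟫ : ℝ) * Real.exp (-‖vs‖^2/2) * vs 1 : ℝ) : ℂ)
           - ((DC * Real.sqrt (3/(8*π)) : ℝ) : ℂ) * Complex.I *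
            (((⟪v, vs⟫ : ℝ) * Real.exp (-‖vs‖^2/2) * vs 2 : ℝ) : ℂ) := by
      intro vs
      by_cases hvs : vs = 0
      · simp [hvs]
      · have hwvs : ‖(‖vs‖⁻¹ • vs : V3)‖ = 1 := norm_smul_inv_norm hvs
        rw [phiE_eq (-1) (by decide) vs, sqrt_gaussM vs, sphY1m1 _ hwvs,
          hsm vs 1, hsm vs 2]
        have h1 := hpre vs hvs 1
        have h2 := hpre vs hvs 2
        calc ((⟪v, vs⟫ : ℝ) : ℂ)
              * ((((2*π)^(-(3:ℝ)/4) * Real.exp (-‖vs‖^2/4) : ℝ) : ℂ)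
                * (((Real.sqrt (1 / (Real.sqrt 2 * Real.Gamma (5/2))) * (‖vs‖ / Real.sqrt 2)
                    * Real.exp (-‖vs‖^2/4) : ℝ) : ℂ)
                  * ((Real.sqrt (3/(8*π)) : ℂ)
                    * (((‖vs‖⁻¹ * vs 1 : ℝ) : ℂ) - Complex.I * ((‖vs‖⁻¹ * vs 2 : ℝ) : ℂ)))))
            = ((Real.sqrt (3/(8*π)) : ℝ) : ℂ)
                * ((((⟪v, vs⟫ : ℝ) * ((2*π)^(-(3:ℝ)/4) * Real.exp (-‖vs‖^2/4)
                  * (Real.sqrt (1 / (Real.sqrt 2 * Real.Gamma (5/2))) * (‖vs‖ / Real.sqrt 2)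
                    * Real.exp (-‖vs‖^2/4))) * (‖vs‖⁻¹ * vs 1) : ℝ) : ℂ)
                 - Complex.I * (((⟪v, vs⟫ : ℝ) * ((2*π)^(-(3:ℝ)/4) * Real.exp (-‖vs‖^2/4)
                  * (Real.sqrt (1 / (Real.sqrt 2 * Real.Gamma (5/2))) * (‖vs‖ / Real.sqrt 2)
                    * Real.exp (-‖vs‖^2/4))) * (‖vs‖⁻¹ * vs 2) : ℝ) : ℂ)) := by
              push_cast
              ring
          _ = _ := by
              rw [h1, h2]
              push_cast
              ring
    simp_rw [hfun]
    simp_rw [rcast]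
    rw [MeasureTheory.integral_sub
      ((intg_integrable v 1).ofReal.const_mul ((RCLike.ofReal (DC * Real.sqrt (3/(8*π))) : ℂ)))
      ((intg_integrable v 2).ofReal.const_mul
        ((RCLike.ofReal (DC * Real.sqrt (3/(8*π))) : ℂ) * Complex.I))]
    rw [MeasureTheory.integral_const_mul, MeasureTheory.integral_const_mul,
      integral_ofReal, integral_ofReal, intg v 1, intg v 2]
    simp only [← rcast]
    rw [sphY1m1 _ hwv, hsm v 1, hsm v 2]
    have kc : ((DC * Real.sqrt (3/(8*π)) * Real.sqrt (2*π)^3 : ℝ) : ℂ)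
        = ((Real.sqrt (4*π/3) * Real.sqrt (3/(8*π)) : ℝ) : ℂ) := by
      exact_mod_cast congrArg (fun x : ℝ => (x : ℂ)) key1
    have hvv : ((‖v‖ : ℝ) : ℂ) * ((‖v‖⁻¹ : ℝ) : ℂ) = 1 := by
      push_cast
      rw [mul_inv_cancel₀]
      exact_mod_cast hv0
    push_cast
    push_cast at kc hvv
    linear_combination ((v 1 : ℂ) - Complex.I * (v 2 : ℂ)) * kc
      - ((Real.sqrt (4*π/3) : ℂ) * (Real.sqrt (3/(8*π)) : ℂ)
        * ((v 1 : ℂ) - Complex.I * (v 2 : ℂ))) * hvv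
  · -- m1 = 0
    subst hm
    have hfun : ∀ vs : V3,
        ((⟪v, vs⟫ : ℝ) : ℂ) * (((Real.sqrt (gaussM vs) : ℝ) : ℂ) * phiE 0 1 0 vs)
          = ((DC * Real.sqrt (3/(4*π)) : ℝ) : ℂ) *
            (((⟪v, vs⟫ : ℝ) * Real.exp (-‖vs‖^2/2) * vs 0 : ℝ) : ℂ) := by
      intro vs
      by_cases hvs : vs = 0
      · simp [hvs]
      · rw [phiE_eq 0 (by decide) vs, sqrt_gaussM vs, sphY10, hsm vs 0]
        have h0 := hpre vs hvs 0
        calc ((⟪v, vs⟫ : ℝ) : ℂ)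
              * ((((2*π)^(-(3:ℝ)/4) * Real.exp (-‖vs‖^2/4) : ℝ) : ℂ)
                * (((Real.sqrt (1 / (Real.sqrt 2 * Real.Gamma (5/2))) * (‖vs‖ / Real.sqrt 2)
                    * Real.exp (-‖vs‖^2/4) : ℝ) : ℂ)
                  * ((Real.sqrt (3/(4*π)) * (‖vs‖⁻¹ * vs 0) : ℝ) : ℂ)))
            = ((Real.sqrt (3/(4*π)) : ℝ) : ℂ)
                * (((⟪v, vs⟫ : ℝ) * ((2*π)^(-(3:ℝ)/4) * Real.exp (-‖vs‖^2/4)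
                  * (Real.sqrt (1 / (Real.sqrt 2 * Real.Gamma (5/2))) * (‖vs‖ / Real.sqrt 2)
                    * Real.exp (-‖vs‖^2/4))) * (‖vs‖⁻¹ * vs 0) : ℝ) : ℂ) := by
              push_cast
              ring
          _ = _ := by
              rw [h0]
              push_cast
              ring
    simp_rw [hfun]
    rw [MeasureTheory.integral_const_mul]
    simp_rw [rcast]
    rw [integral_ofReal, intg v 0]
    simp only [← rcast]
    rw [sphY10, hsm v 0]
    have kc : ((DC * Real.sqrt (3/(4*π)) * Real.sqrt (2*π)^3 : ℝ) : ℂ)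
        = ((Real.sqrt (4*π/3) * Real.sqrt (3/(4*π)) : ℝ) : ℂ) := by
      exact_mod_cast congrArg (fun x : ℝ => (x : ℂ)) key0
    have hvv : ((‖v‖ : ℝ) : ℂ) * ((‖v‖⁻¹ : ℝ) : ℂ) = 1 := by
      push_cast
      rw [mul_inv_cancel₀]
      exact_mod_cast hv0
    push_cast
    push_cast at kc hvv
    linear_combination (v 0 : ℂ) * kc
      - ((Real.sqrt (4*π/3) : ℂ) * (Real.sqrt (3/(4*π)) : ℂ) * (v 0 : ℂ)) * hvv
  · -- m1 = 1
    subst hm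
    have hfun : ∀ vs : V3,
        ((⟪v, vs⟫ : ℝ) : ℂ) * (((Real.sqrt (gaussM vs) : ℝ) : ℂ) * phiE 0 1 1 vs)
          = ((DC * Real.sqrt (3/(8*π)) : ℝ) : ℂ) *
            (((⟪v, vs⟫ : ℝ) * Real.exp (-‖vs‖^2/2) * vs 1 : ℝ) : ℂ)
           + ((DC * Real.sqrt (3/(8*π)) : ℝ) : ℂ) * Complex.I *
            (((⟪v, vs⟫ : ℝ) * Real.exp (-‖vs‖^2/2) * vs 2 : ℝ) : ℂ) := by
      intro vs
      by_cases hvs : vs = 0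
      · simp [hvs]
      · have hwvs : ‖(‖vs‖⁻¹ • vs : V3)‖ = 1 := norm_smul_inv_norm hvs
        rw [phiE_eq 1 (by decide) vs, sqrt_gaussM vs, sphY11 _ hwvs,
          hsm vs 1, hsm vs 2]
        have h1 := hpre vs hvs 1
        have h2 := hpre vs hvs 2
        calc ((⟪v, vs⟫ : ℝ) : ℂ)
              * ((((2*π)^(-(3:ℝ)/4) * Real.exp (-‖vs‖^2/4) : ℝ) : ℂ)
                * (((Real.sqrt (1 / (Real.sqrt 2 * Real.Gamma (5/2))) * (‖vs‖ / Real.sqrt 2)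
                    * Real.exp (-‖vs‖^2/4) : ℝ) : ℂ)
                  * ((Real.sqrt (3/(8*π)) : ℂ)
                    * (((‖vs‖⁻¹ * vs 1 : ℝ) : ℂ) + Complex.I * ((‖vs‖⁻¹ * vs 2 : ℝ) : ℂ)))))
            = ((Real.sqrt (3/(8*π)) : ℝ) : ℂ)
                * ((((⟪v, vs⟫ : ℝ) * ((2*π)^(-(3:ℝ)/4) * Real.exp (-‖vs‖^2/4)
                  * (Real.sqrt (1 / (Real.sqrt 2 * Real.Gamma (5/2))) * (‖vs‖ / Real.sqrt 2)
                    * Real.exp (-‖vs‖^2/4))) * (‖vs‖⁻¹ * vs 1) : ℝ) : ℂ)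
                 + Complex.I * (((⟪v, vs⟫ : ℝ) * ((2*π)^(-(3:ℝ)/4) * Real.exp (-‖vs‖^2/4)
                  * (Real.sqrt (1 / (Real.sqrt 2 * Real.Gamma (5/2))) * (‖vs‖ / Real.sqrt 2)
                    * Real.exp (-‖vs‖^2/4))) * (‖vs‖⁻¹ * vs 2) : ℝ) : ℂ)) := by
              push_cast
              ring
          _ = _ := by
              rw [h1, h2]
              push_cast
              ring
    simp_rw [hfun]
    simp_rw [rcast]
    rw [MeasureTheory.integral_add
      ((intg_integrable v 1).ofReal.const_mul ((RCLike.ofReal (DC * Real.sqrt (3/(8*π))) : ℂ)))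
      ((intg_integrable v 2).ofReal.const_mul
        ((RCLike.ofReal (DC * Real.sqrt (3/(8*π))) : ℂ) * Complex.I))]
    rw [MeasureTheory.integral_const_mul, MeasureTheory.integral_const_mul,
      integral_ofReal, integral_ofReal, intg v 1, intg v 2]
    simp only [← rcast]
    rw [sphY11 _ hwv, hsm v 1, hsm v 2]
    have kc : ((DC * Real.sqrt (3/(8*π)) * Real.sqrt (2*π)^3 : ℝ) : ℂ)
        = ((Real.sqrt (4*π/3) * Real.sqrt (3/(8*π)) : ℝ) : ℂ) := by
      exact_mod_cast congrArg (fun x : ℝ => (x : ℂ)) key1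
    have hvv : ((‖v‖ : ℝ) : ℂ) * ((‖v‖⁻¹ : ℝ) : ℂ) = 1 := by
      push_cast
      rw [mul_inv_cancel₀]
      exact_mod_cast hv0
    push_cast
    push_cast at kc hvv
    linear_combination ((v 1 : ℂ) + Complex.I * (v 2 : ℂ)) * kc
      - ((Real.sqrt (4*π/3) : ℂ) * (Real.sqrt (3/(8*π)) : ℂ)
        * ((v 1 : ℂ) + Complex.I * (v 2 : ℂ))) * hvv


end
end

section
/- Suppose the family (g_{n,l,m}) of continuously differentiable functions [0,∞) → ℂ solves the infinite ODE system (ODE-0), and the initial values satisfy g_{0,0,0}(0) = g_{0,1,-1}(0) = g_{0,1,0}(0) = g_{0,1,1}(0) = g_{1,0,0}(0) = 0. Then for all t ≥ 0: g_{0,0,0}(t) = 0, g_{0,1,m}(t) = 0 for all |m| ≤ 1, g_{1,0,0}(t) = 0, and g_{0,2,m}(t) = e^{-12t} g_{0,2,m}(0) for all |m| ≤ 2. -/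
open MeasureTheory Real
open scoped RealInnerProductSpace BigOperators

noncomputable section

/-- Eigenvalues of the linearized Landau operator: `λ_{0,0} = λ_{0,1} = λ_{1,0} = 0`,
`λ_{0,2} = 12`, and `λ_{n,l} = 2(2n+l) + l(l+1)` for `2n+l > 2`. -/
def lamNL (n l : ℤ) : ℝ :=
  if n = 0 ∧ l = 2 then 12 else if 2*n + l ≤ 2 then 0 else ((2*(2*n+l) + l*(l+1) : ℤ) : ℝ)

/-- Right-hand side `(𝐋(g,g), φ_{n,l,m})` of the infinite ODE system (ODE-0). -/
def odeRHS0 (g : ℤ → ℤ → ℤ → ℝ → ℂ) (n l m : ℤ) (t : ℝ) : ℂ :=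
  -(((2*(2*n+l) + l*(l+1) : ℤ) : ℂ)) * g 0 0 0 t * g n l m t
  + (∑ m1 ∈ Finset.Icc (-1:ℤ) 1,
      if ((m - m1).natAbs : ℤ) ≤ l + 1 ∧ 1 ≤ n then
        coefAm (n-1) (l+1) (m-m1) m1 * g 0 1 m1 t * g (n-1) (l+1) (m-m1) t else 0)
  + (∑ m1 ∈ Finset.Icc (-1:ℤ) 1,
      if ((m - m1).natAbs : ℤ) ≤ l - 1 then
        coefAp n (l-1) (m-m1) m1 * g 0 1 m1 t * g n (l-1) (m-m1) t else 0)
  + ((4 * Real.sqrt (3*(n:ℝ)*(2*(n:ℝ)+2*(l:ℝ)+1)) / 3 : ℝ) : ℂ) * g 1 0 0 t * g (n-1) l m t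
  + (∑ m2 ∈ Finset.Icc (-2:ℤ) 2,
      if ((m - m2).natAbs : ℤ) ≤ l + 2 ∧ 2 ≤ n then
        coefA1 (n-2) (l+2) (m-m2) m2 * g 0 2 m2 t * g (n-2) (l+2) (m-m2) t else 0)
  + (∑ m2 ∈ Finset.Icc (-2:ℤ) 2,
      if ((m - m2).natAbs : ℤ) ≤ l ∧ 1 ≤ n then
        coefA2 (n-1) l (m-m2) m2 * g 0 2 m2 t * g (n-1) l (m-m2) t else 0)
  + (∑ m2 ∈ Finset.Icc (-2:ℤ) 2,
      if ((m - m2).natAbs : ℤ) ≤ l - 2 then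
        coefA3 n (l-2) (m-m2) m2 * g 0 2 m2 t * g n (l-2) (m-m2) t else 0)


private lemma myConstAux {f : ℝ → ℂ} (hc : ContinuousOn f (Set.Ici 0))
    (hd : ∀ s : ℝ, 0 < s → HasDerivAt f 0 s) {t : ℝ} (ht : 0 ≤ t) : f t = f 0 := by
  rcases ht.eq_or_lt with h | h
  · rw [← h]
  · have key : ∀ s : ℝ, 0 < s → s ≤ t → f t = f s := by
      intro s hs hst
      have h1 : ContinuousOn f (Set.Icc s t) := hc.mono (fun x hx => le_trans hs.le hx.1)
      have h2 : ∀ x ∈ Set.Ico s t, HasDerivWithinAt f 0 (Set.Ici x) x :=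
        fun x hx => (hd x (lt_of_lt_of_le hs hx.1)).hasDerivWithinAt
      exact constant_of_has_deriv_right_zero h1 h2 t ⟨hst, le_rfl⟩
    have h1 : Filter.Tendsto f (nhdsWithin 0 (Set.Ioi 0)) (nhds (f 0)) :=
      (hc 0 Set.self_mem_Ici).mono_left (nhdsWithin_mono 0 Set.Ioi_subset_Ici_self)
    have h2 : ∀ᶠ s in nhdsWithin 0 (Set.Ioi 0), f s = f t := by
      filter_upwards [Ioc_mem_nhdsGT_of_mem ⟨le_rfl, h⟩] with s hs
      exact (key s hs.1 hs.2).symm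
    have h3 : Filter.Tendsto f (nhdsWithin 0 (Set.Ioi 0)) (nhds (f t)) :=
      Filter.Tendsto.congr' (h2.mono fun s hs => hs.symm) tendsto_const_nhds
    exact tendsto_nhds_unique h3 h1

private lemma myExpAux {f : ℝ → ℂ} (hc : ContinuousOn f (Set.Ici 0))
    (hd : ∀ s : ℝ, 0 < s → HasDerivAt f (-12 * f s) s) {t : ℝ} (ht : 0 ≤ t) :
    f t = Complex.exp (-12 * t) * f 0 := by
  have hE : ∀ s : ℝ, HasDerivAt (fun s : ℝ => Complex.exp (12 * s))
      (12 * Complex.exp (12 * s)) s := by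
    intro s
    have h0 : HasDerivAt (fun w : ℂ => Complex.exp (12 * w)) (12 * Complex.exp (12 * s)) (s : ℂ) := by
      have h1 := (Complex.hasDerivAt_exp ((12 : ℂ) * s)).comp (s : ℂ)
        ((hasDerivAt_id (s : ℂ)).const_mul (12 : ℂ))
      simp only [Function.comp_def] at h1
      rw [show (12 * Complex.exp (12 * (s : ℂ))) = Complex.exp (12 * (s : ℂ)) * (12 * 1) by ring]
      exact h1
    exact h0.comp_ofReal
  have hh : ∀ s : ℝ, 0 < s → HasDerivAt (fun s : ℝ => Complex.exp (12 * s) * f s) 0 s := by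
    intro s hs
    have := (hE s).mul (hd s hs)
    rw [show (0 : ℂ) = 12 * Complex.exp (12 * (s : ℂ)) * f s + Complex.exp (12 * (s : ℂ)) * (-12 * f s) by ring]
    exact this
  have hhc : ContinuousOn (fun s : ℝ => Complex.exp (12 * s) * f s) (Set.Ici 0) :=
    (Complex.continuous_exp.comp (by continuity)).continuousOn.mul hc
  have h := myConstAux hhc hh ht
  simp only [Complex.ofReal_zero, mul_zero, Complex.exp_zero, one_mul] at h
  have h2 : Complex.exp (-12 * t) * (Complex.exp (12 * t) * f t) = f t := by
    rw [← mul_assoc, ← Complex.exp_add]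
    ring_nf
    simp
  rw [← h2, h]

/-- any continuously differentiable solution of the infinite system (ODE-0)
whose initial data vanish at the indices `(0,0,0)`, `(0,1,m)`, `(1,0,0)` satisfies, for
all `t ≥ 0`: `g_{0,0,0}(t) = g_{0,1,m}(t) = g_{1,0,0}(t) = 0` and
`g_{0,2,m}(t) = e^{-12t} g_{0,2,m}(0)`. -/
theorem ode0_low_modes (g : ℤ → ℤ → ℤ → ℝ → ℂ)
    (hneg : ∀ n l m : ℤ, n < 0 ∨ l < 0 → ∀ t : ℝ, g n l m t = 0)
    (hcont : ∀ n l m : ℤ, 0 ≤ n → 0 ≤ l → (m.natAbs : ℤ) ≤ l →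
      ContinuousOn (g n l m) (Set.Ici 0))
    (hode : ∀ n l m : ℤ, 0 ≤ n → 0 ≤ l → (m.natAbs : ℤ) ≤ l → ∀ t : ℝ, 0 < t →
      HasDerivAt (g n l m) (odeRHS0 g n l m t - ((lamNL n l : ℝ) : ℂ) * g n l m t) t)
    (hinit : g 0 0 0 0 = 0 ∧ g 0 1 (-1) 0 = 0 ∧ g 0 1 0 0 = 0 ∧ g 0 1 1 0 = 0 ∧
      g 1 0 0 0 = 0) :
    ∀ t : ℝ, 0 ≤ t →
      g 0 0 0 t = 0 ∧ (∀ m : ℤ, m.natAbs ≤ 1 → g 0 1 m t = 0) ∧ g 1 0 0 t = 0 ∧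
      (∀ m : ℤ, m.natAbs ≤ 2 → g 0 2 m t = ((Real.exp (-12*t) : ℝ) : ℂ) * g 0 2 m 0) := by
  obtain ⟨hi000, hi1m, hi10, hi11, hi100⟩ := hinit
  have hb1 : ∀ x : ℤ, ¬(|x| ≤ -1) := fun x => not_le.mpr (lt_of_lt_of_le (by norm_num) (abs_nonneg x))
  have hb2 : ∀ x : ℤ, ¬(|x| ≤ -2) := fun x => not_le.mpr (lt_of_lt_of_le (by norm_num) (abs_nonneg x))
  -- Step 1 : g 0 0 0 vanishes identically
  have h000 : ∀ t : ℝ, 0 ≤ t → g 0 0 0 t = 0 := by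
    have hd : ∀ s : ℝ, 0 < s → HasDerivAt (g 0 0 0) 0 s := by
      intro s hs
      have h := hode 0 0 0 le_rfl le_rfl (by norm_num) s hs
      have e : odeRHS0 g 0 0 0 s - ((lamNL 0 0 : ℝ) : ℂ) * g 0 0 0 s = 0 := by
        have e1 : odeRHS0 g 0 0 0 s = 0 := by
          simp [odeRHS0, hb1, hb2]
        have e2 : lamNL 0 0 = 0 := by norm_num [lamNL]
        rw [e1, e2]
        simp
      rw [e] at h
      exact h
    intro t ht
    rw [myConstAux (hcont 0 0 0 le_rfl le_rfl (by norm_num)) hd ht, hi000]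
  -- Step 2 : g 0 1 m vanishes identically for |m| ≤ 1
  have h01 : ∀ m : ℤ, (m.natAbs : ℤ) ≤ 1 → ∀ t : ℝ, 0 ≤ t → g 0 1 m t = 0 := by
    intro m hm
    have hd : ∀ s : ℝ, 0 < s → HasDerivAt (g 0 1 m) 0 s := by
      intro s hs
      have h := hode 0 1 m le_rfl (by norm_num) hm s hs
      have e : odeRHS0 g 0 1 m s - ((lamNL 0 1 : ℝ) : ℂ) * g 0 1 m s = 0 := by
        have e1 : odeRHS0 g 0 1 m s = 0 := by
          simp [odeRHS0, h000 s hs.le, hb1, abs_nonpos_iff, sub_eq_zero]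
        have e2 : lamNL 0 1 = 0 := by norm_num [lamNL]
        rw [e1, e2]
        simp
      rw [e] at h
      exact h
    intro t ht
    rw [myConstAux (hcont 0 1 m le_rfl (by norm_num) hm) hd ht]
    have hm' : m = -1 ∨ m = 0 ∨ m = 1 := by omega
    rcases hm' with h | h | h <;> rw [h] <;> assumption
  -- Step 3 : g 1 0 0 vanishes identically
  have h100 : ∀ t : ℝ, 0 ≤ t → g 1 0 0 t = 0 := by
    have hd : ∀ s : ℝ, 0 < s → HasDerivAt (g 1 0 0) 0 s := by
      intro s hs
      have h := hode 1 0 0 (by norm_num) le_rfl (by norm_num) s hs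
      have e : odeRHS0 g 1 0 0 s - ((lamNL 1 0 : ℝ) : ℂ) * g 1 0 0 s = 0 := by
        have e1 : odeRHS0 g 1 0 0 s = 0 := by
          simp only [odeRHS0]
          rw [Finset.sum_eq_zero (fun x hx => ?_)]
          · simp [h000 s hs.le, hb1, hb2, abs_nonpos_iff, sub_eq_zero]
          · simp only [Finset.mem_Icc] at hx
            rw [h01 x (by omega) s hs.le]
            simp
        have e2 : lamNL 1 0 = 0 := by norm_num [lamNL]
        rw [e1, e2]
        simp
      rw [e] at h
      exact h
    intro t ht
    rw [myConstAux (hcont 1 0 0 (by norm_num) le_rfl (by norm_num)) hd ht, hi100]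
  -- Step 4 : g 0 2 m decays exponentially
  have h02 : ∀ m : ℤ, (m.natAbs : ℤ) ≤ 2 → ∀ t : ℝ, 0 ≤ t →
      g 0 2 m t = Complex.exp (-12 * t) * g 0 2 m 0 := by
    intro m hm
    have hd : ∀ s : ℝ, 0 < s → HasDerivAt (g 0 2 m) (-12 * g 0 2 m s) s := by
      intro s hs
      have h := hode 0 2 m le_rfl (by norm_num) hm s hs
      have e : odeRHS0 g 0 2 m s - ((lamNL 0 2 : ℝ) : ℂ) * g 0 2 m s = -12 * g 0 2 m s := by
        have e1 : odeRHS0 g 0 2 m s = 0 := by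
          simp only [odeRHS0]
          rw [Finset.sum_eq_zero (fun x hx => ?_)]
          · simp [h000 s hs.le, hb1, abs_nonpos_iff, sub_eq_zero]
            refine Finset.sum_eq_zero fun x hx => ?_
            simp only [Finset.mem_Icc] at hx
            rw [h01 x (by omega) s hs.le]
            simp
          · simp only [Finset.mem_Icc] at hx
            rw [h01 x (by omega) s hs.le]
            simp
        have e2 : lamNL 0 2 = 12 := by norm_num [lamNL]
        rw [e1, e2]
        push_cast
        ring
      rw [e] at h
      exact h
    intro t ht
    exact myExpAux (hcont 0 2 m le_rfl (by norm_num) hm) hd ht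
  intro t ht
  refine ⟨h000 t ht, fun m hm => h01 m (by exact_mod_cast hm) t ht, h100 t ht, fun m hm => ?_⟩
  rw [h02 m (by exact_mod_cast hm) t ht]
  norm_num [Complex.ofReal_exp]


end
end
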